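/- Let $\Omega = \{y \in \mathbb{R}^3 : y_2^2 + y_3^2 < 1,\ -1 < y_1 < 0\}$ and for $\delta > 0$ let $z_\delta = (\delta, 0, 0)$. For a natural number $m \geq 1$, the integral $\widetilde{I}_m(\delta) := \int_\Omega \frac{1}{|y|} \frac{-(y_1 - \delta)}{|y - z_\delta|^3}\, y_1^m \, dy$ equals $(-1)^m 2\pi \int_0^1 (y_1+\delta)\,y_1^m \left(\int_{y_1}^{\sqrt{y_1^2+1}} \frac{ds}{(s^2 + \delta(2y_1+\delta))^{3/2}}\right) dy_1$. -/

import Mathlib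

open MeasureTheory Set Real


lemma null_axis : volume ({x : ℝ × ℝ | x.2 = 0}) = 0 := by
  have : {x : ℝ × ℝ | x.2 = 0} = (univ : Set ℝ) ×ˢ ({0} : Set ℝ) := by
    ext x; simp [Set.mem_prod, eq_comm, Prod.ext_iff]
  rw [this, Measure.volume_eq_prod, Measure.prod_prod]
  simp

lemma intOn_disc : IntegrableOn (fun x : ℝ × ℝ => 1 / Real.sqrt (x.1 ^ 2 + x.2 ^ 2))
    {x : ℝ × ℝ | x.1 ^ 2 + x.2 ^ 2 < 1} volume := by
  set g : ℝ × ℝ → ℝ := fun x => 1 / Real.sqrt (x.1 ^ 2 + x.2 ^ 2) with hg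
  set s : Set (ℝ × ℝ) := Ioo (0:ℝ) 1 ×ˢ Ioo (-π) π with hs
  set B : ℝ × ℝ → ℝ × ℝ →L[ℝ] ℝ × ℝ := fun p =>
    LinearMap.toContinuousLinearMap (Matrix.toLin (Module.Basis.finTwoProd ℝ) (Module.Basis.finTwoProd ℝ)
      !![cos p.2, -p.1 * sin p.2; sin p.2, p.1 * cos p.2]) with hB
  have B_det : ∀ p : ℝ × ℝ, (B p).det = p.1 := by
    intro p
    conv_rhs => rw [← one_mul p.1, ← cos_sq_add_sin_sq p.2]
    simp only [hB, neg_mul, LinearMap.det_toContinuousLinearMap, LinearMap.det_toLin,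
      Matrix.det_fin_two_of, sub_neg_eq_add]
    ring
  have hderiv : ∀ p ∈ s, HasFDerivWithinAt (⇑polarCoord.symm) (B p) s p := fun p _ =>
    (hasFDerivAt_polarCoord_symm p).hasFDerivWithinAt
  have hinj : InjOn (⇑polarCoord.symm) s := by
    apply (polarCoord.symm.injOn).mono
    rw [hs, polarCoord.symm_source]
    exact fun p hp => ⟨Ioo_subset_Ioi_self hp.1, hp.2⟩
  have hmeas : MeasurableSet s := measurableSet_Ioo.prod measurableSet_Ioo
  have key := (integrableOn_image_iff_integrableOn_abs_det_fderiv_smul volume hmeas hderiv hinj g)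
  have hint : IntegrableOn (fun p => |(B p).det| • g (polarCoord.symm p)) s volume := by
    have : EqOn (fun p => |(B p).det| • g (polarCoord.symm p)) (fun _ => (1:ℝ)) s := by
      intro p hp
      have hp1 : 0 < p.1 := hp.1.1
      simp only [B_det, smul_eq_mul, polarCoord_symm_apply, hg]
      have : (p.1 * cos p.2) ^ 2 + (p.1 * sin p.2) ^ 2 = p.1 ^ 2 := by
        rw [mul_pow, mul_pow, ← mul_add, cos_sq_add_sin_sq]; ring
      rw [this, Real.sqrt_sq hp1.le, abs_of_pos hp1]
      field_simp
    exact (integrableOn_const (ne_of_lt (by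
      rw [hs, Measure.volume_eq_prod, Measure.prod_prod]
      exact ENNReal.mul_lt_top (measure_Ioo_lt_top) (measure_Ioo_lt_top)))).congr_fun
      (fun p hp => (this hp).symm) hmeas
  have himg : IntegrableOn g (⇑polarCoord.symm '' s) volume := key.2 hint
  have hsub : {x : ℝ × ℝ | x.1 ^ 2 + x.2 ^ 2 < 1} ⊆
      (⇑polarCoord.symm '' s) ∪ {x : ℝ × ℝ | x.2 = 0} := by
    intro x hx
    by_cases hx2 : x.2 = 0
    · exact Or.inr hx2
    · left
      have hsrc : x ∈ polarCoord.source := Or.inr hx2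
      have htgt := polarCoord.map_source hsrc
      refine ⟨polarCoord x, ?_, polarCoord.left_inv hsrc⟩
      constructor
      · refine ⟨htgt.1, ?_⟩
        have : (polarCoord x).1 = Real.sqrt (x.1 ^ 2 + x.2 ^ 2) := rfl
        rw [this]
        rw [show (1:ℝ) = Real.sqrt 1 by simp]
        exact Real.sqrt_lt_sqrt (by positivity) (by simpa using hx)
      · exact htgt.2
  refine IntegrableOn.mono_set ?_ hsub
  apply himg.union
  rw [IntegrableOn, Measure.restrict_eq_zero.2 null_axis]
  exact integrable_zero_measure

-- substitution lemma: ∫_0^1 r * A(r) dr = ∫_{-t}^{√(t²+1)} F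
lemma subst_lemma (m : ℕ) (δ t : ℝ) (hδ : 0 < δ) (ht : t < 0) :
    (∫ r in (0:ℝ)..1, r * ((1 / Real.sqrt (t ^ 2 + r ^ 2))
        * (-(t - δ) / Real.sqrt ((t - δ) ^ 2 + r ^ 2) ^ 3) * t ^ m))
      = (δ - t) * t ^ m *
        ∫ s in (-t)..Real.sqrt (t ^ 2 + 1), 1 / Real.sqrt (s ^ 2 + δ * (δ - 2 * t)) ^ 3 := by
  have htne : t ≠ 0 := ht.ne
  have hc : 0 < δ * (δ - 2 * t) := by nlinarith
  set φ : ℝ → ℝ := fun r => Real.sqrt (t ^ 2 + r ^ 2) with hφ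
  set φ' : ℝ → ℝ := fun r => r / Real.sqrt (t ^ 2 + r ^ 2) with hφ'
  set F : ℝ → ℝ := fun s => (δ - t) * t ^ m * (1 / Real.sqrt (s ^ 2 + δ * (δ - 2 * t)) ^ 3)
    with hF
  have hpos : ∀ r : ℝ, 0 < t ^ 2 + r ^ 2 := fun r => by positivity
  have hderiv : ∀ r ∈ uIcc (0:ℝ) 1, HasDerivAt φ (φ' r) r := by
    intro r _
    have h1 : HasDerivAt (fun r : ℝ => t ^ 2 + r ^ 2) (2 * r) r := by
      simpa using (hasDerivAt_pow 2 r).const_add (t^2)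
    have h2 := (Real.hasDerivAt_sqrt (hpos r).ne').comp r h1
    have := Real.sqrt_pos.mpr (hpos r)
    refine h2.congr_deriv ?_
    simp only [hφ']
    field_simp
  have hcontφ' : ContinuousOn φ' (uIcc (0:ℝ) 1) := by
    apply ContinuousOn.div continuousOn_id
    · exact (Real.continuous_sqrt.comp (by continuity)).continuousOn
    · intro r _
      exact (Real.sqrt_pos.mpr (hpos r)).ne'
  have hcontF : Continuous F := by
    apply continuous_const.mul
    apply continuous_const.div
    · exact (Real.continuous_sqrt.comp (by continuity)).pow 3
    · intro s
      have : 0 < s ^ 2 + δ * (δ - 2 * t) := by positivity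
      positivity
  have key := intervalIntegral.integral_comp_smul_deriv hderiv hcontφ' hcontF
  have heq : ∀ r : ℝ, φ' r • (F ∘ φ) r
      = r * ((1 / Real.sqrt (t ^ 2 + r ^ 2))
        * (-(t - δ) / Real.sqrt ((t - δ) ^ 2 + r ^ 2) ^ 3) * t ^ m) := by
    intro r
    have hs : Real.sqrt (t ^ 2 + r ^ 2) > 0 := Real.sqrt_pos.mpr (hpos r)
    simp only [smul_eq_mul, Function.comp, hφ, hφ', hF]
    have hsq : Real.sqrt (t ^ 2 + r ^ 2) ^ 2 = t ^ 2 + r ^ 2 := Real.sq_sqrt (hpos r).le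
    rw [hsq]
    have harg : t ^ 2 + r ^ 2 + δ * (δ - 2 * t) = (t - δ) ^ 2 + r ^ 2 := by ring
    rw [harg]
    have h5 : t - δ ≠ 0 := by intro h; nlinarith
    have h4 : (0:ℝ) < (t - δ) ^ 2 := pow_two_pos_of_ne_zero h5
    have hs2 : Real.sqrt ((t - δ) ^ 2 + r ^ 2) > 0 := Real.sqrt_pos.mpr (by positivity)
    rw [neg_sub]
    field_simp
  have hφ0 : φ 0 = -t := by
    simp only [hφ]
    rw [show t ^ 2 + 0 ^ 2 = t ^ 2 by ring, Real.sqrt_sq_eq_abs, abs_of_neg ht]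
  have hφ1 : φ 1 = Real.sqrt (t ^ 2 + 1) := by norm_num [hφ]
  have step1 : (∫ r in (0:ℝ)..1, r * ((1 / Real.sqrt (t ^ 2 + r ^ 2))
        * (-(t - δ) / Real.sqrt ((t - δ) ^ 2 + r ^ 2) ^ 3) * t ^ m))
      = ∫ x in (0:ℝ)..1, φ' x • (F ∘ φ) x :=
    intervalIntegral.integral_congr (fun r _ => (heq r).symm)
  rw [step1, key, hφ0, hφ1]
  simp only [hF]
  rw [intervalIntegral.integral_const_mul]

lemma inner2 (m : ℕ) (δ t : ℝ) (hδ : 0 < δ) (ht : t < 0) :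
    (∫ x : ℝ × ℝ, ({x : ℝ × ℝ | x.1 ^ 2 + x.2 ^ 2 < 1}.indicator
        (fun x => (1 / Real.sqrt (t ^ 2 + x.1 ^ 2 + x.2 ^ 2))
          * (-(t - δ) / Real.sqrt ((t - δ) ^ 2 + x.1 ^ 2 + x.2 ^ 2) ^ 3) * t ^ m)) x)
      = (2 * π) * ((δ - t) * t ^ m *
          ∫ s in (-t)..Real.sqrt (t ^ 2 + 1), 1 / Real.sqrt (s ^ 2 + δ * (δ - 2 * t)) ^ 3) := by
  set K : ℝ → ℝ := fun r => r * ((1 / Real.sqrt (t ^ 2 + r ^ 2))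
      * (-(t - δ) / Real.sqrt ((t - δ) ^ 2 + r ^ 2) ^ 3) * t ^ m) with hK
  rw [← integral_comp_polarCoord_symm]
  have step1 : (∫ p in polarCoord.target,
      p.1 • ({x : ℝ × ℝ | x.1 ^ 2 + x.2 ^ 2 < 1}.indicator
        (fun x => (1 / Real.sqrt (t ^ 2 + x.1 ^ 2 + x.2 ^ 2))
          * (-(t - δ) / Real.sqrt ((t - δ) ^ 2 + x.1 ^ 2 + x.2 ^ 2) ^ 3) * t ^ m))
        (polarCoord.symm p))
      = ∫ p in polarCoord.target, ((Iio (1:ℝ)).indicator K p.1) * (fun _ : ℝ => (1:ℝ)) p.2 := by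
    apply setIntegral_congr_fun polarCoord.open_target.measurableSet
    intro p hp
    have hp1 : 0 < p.1 := hp.1
    have hxy : (p.1 * cos p.2) ^ 2 + (p.1 * sin p.2) ^ 2 = p.1 ^ 2 := by
      rw [mul_pow, mul_pow, ← mul_add, cos_sq_add_sin_sq]; ring
    have hval1 : t ^ 2 + (p.1 * cos p.2) ^ 2 + (p.1 * sin p.2) ^ 2 = t ^ 2 + p.1 ^ 2 := by
      rw [add_assoc, hxy]
    have hval2 : (t - δ) ^ 2 + (p.1 * cos p.2) ^ 2 + (p.1 * sin p.2) ^ 2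
        = (t - δ) ^ 2 + p.1 ^ 2 := by rw [add_assoc, hxy]
    have hiff : (p.1 * cos p.2) ^ 2 + (p.1 * sin p.2) ^ 2 < 1 ↔ p.1 < 1 := by
      rw [hxy]; constructor <;> intro h <;> nlinarith
    simp only [Set.indicator_apply, Set.mem_setOf_eq, polarCoord_symm_apply, Set.mem_Iio,
      hval1, hval2, hiff, hK]
    split_ifs
    · simp only [smul_eq_mul]; ring
    · simp
  rw [step1]
  rw [show polarCoord.target = Ioi (0:ℝ) ×ˢ Ioo (-π) π from rfl]
  rw [Measure.volume_eq_prod, ← Measure.prod_restrict]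
  rw [MeasureTheory.integral_prod_mul ((Iio (1:ℝ)).indicator K) (fun _ : ℝ => (1:ℝ))]
  have hθ : (∫ _ in Ioo (-π) π, (1:ℝ)) = 2 * π := by
    simp only [integral_const, Measure.restrict_apply, MeasurableSet.univ, Set.univ_inter,
      Real.volume_Ioo, smul_eq_mul, mul_one]
    rw [measureReal_restrict_apply MeasurableSet.univ, univ_inter,
      Real.volume_real_Ioo_of_le (by linarith [pi_pos])]
    ring
  have hr : (∫ r in Ioi (0:ℝ), (Iio (1:ℝ)).indicator K r)
      = (δ - t) * t ^ m *
        ∫ s in (-t)..Real.sqrt (t ^ 2 + 1), 1 / Real.sqrt (s ^ 2 + δ * (δ - 2 * t)) ^ 3 := by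
    rw [integral_indicator measurableSet_Iio, Measure.restrict_restrict measurableSet_Iio,
      Set.Iio_inter_Ioi, ← integral_Ioc_eq_integral_Ioo,
      ← intervalIntegral.integral_of_le zero_le_one]
    exact subst_lemma m δ t hδ ht
  rw [hθ, hr]
  ring

noncomputable def E3 : (ℝ × ℝ × ℝ) ≃ᵐ (Fin 3 → ℝ) :=
  ((MeasurableEquiv.refl ℝ).prodCongr (MeasurableEquiv.finTwoArrow (α := ℝ)).symm).trans
    (MeasurableEquiv.piFinSuccAbove (fun _ : Fin 3 => ℝ) 0).symm

lemma E3_apply_0 (p : ℝ × ℝ × ℝ) : E3 p 0 = p.1 := rfl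
lemma E3_apply_1 (p : ℝ × ℝ × ℝ) : E3 p 1 = p.2.1 := rfl
lemma E3_apply_2 (p : ℝ × ℝ × ℝ) : E3 p 2 = p.2.2 := rfl

lemma E3_mp : MeasurePreserving (⇑E3) volume volume := by
  have h1 : MeasurePreserving (⇑(MeasurableEquiv.piFinSuccAbove (fun _ : Fin 3 => ℝ) 0).symm)
      volume volume := (volume_preserving_piFinSuccAbove (fun _ : Fin 3 => ℝ) 0).symm
  have h2 : MeasurePreserving
      (⇑((MeasurableEquiv.refl ℝ).prodCongr (MeasurableEquiv.finTwoArrow (α := ℝ)).symm))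
      volume volume := by
    rw [show (volume : Measure (ℝ × ℝ × ℝ)) = volume.prod volume from Measure.volume_eq_prod _ _,
      show (volume : Measure (ℝ × (Fin 2 → ℝ))) = volume.prod volume from Measure.volume_eq_prod _ _]
    exact (MeasurePreserving.id volume).prod (volume_preserving_finTwoArrow ℝ).symm
  exact h1.comp h2

lemma intA (m : ℕ) (δ : ℝ) (hδ : 0 < δ) :
    Integrable (({p : ℝ × ℝ × ℝ | p.2.1 ^ 2 + p.2.2 ^ 2 < 1 ∧ -1 < p.1 ∧ p.1 < 0}).indicator
      (fun p : ℝ × ℝ × ℝ => (1 / Real.sqrt (p.1 ^ 2 + p.2.1 ^ 2 + p.2.2 ^ 2))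
        * (-(p.1 - δ) / Real.sqrt ((p.1 - δ) ^ 2 + p.2.1 ^ 2 + p.2.2 ^ 2) ^ 3)
        * p.1 ^ m)) volume := by
  set D : Set (ℝ × ℝ) := {x : ℝ × ℝ | x.1 ^ 2 + x.2 ^ 2 < 1} with hD
  have hDm : MeasurableSet D :=
    measurableSet_lt (by fun_prop : Measurable fun x : ℝ × ℝ => x.1 ^ 2 + x.2 ^ 2)
      measurable_const
  set A : Set (ℝ × ℝ × ℝ) := {p : ℝ × ℝ × ℝ | p.2.1 ^ 2 + p.2.2 ^ 2 < 1 ∧ -1 < p.1 ∧ p.1 < 0}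
    with hA
  have hAm : MeasurableSet A := by
    have h1 : MeasurableSet {p : ℝ × ℝ × ℝ | p.2.1 ^ 2 + p.2.2 ^ 2 < 1} :=
      measurableSet_lt (by fun_prop : Measurable fun p : ℝ × ℝ × ℝ => p.2.1 ^ 2 + p.2.2 ^ 2)
        measurable_const
    have h2 : MeasurableSet {p : ℝ × ℝ × ℝ | -1 < p.1} :=
      measurableSet_lt measurable_const (by fun_prop : Measurable fun p : ℝ × ℝ × ℝ => p.1)
    have h3 : MeasurableSet {p : ℝ × ℝ × ℝ | p.1 < 0} :=
      measurableSet_lt (by fun_prop : Measurable fun p : ℝ × ℝ × ℝ => p.1) measurable_const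
    exact (h1.inter (h2.inter h3))
  set g : ℝ × ℝ × ℝ → ℝ := fun p =>
    ((Ioo (-1:ℝ) 0).indicator (fun _ => (δ+1)/δ^3) p.1)
      * (D.indicator (fun x => 1 / Real.sqrt (x.1 ^ 2 + x.2 ^ 2)) p.2) with hg
  have hgint : Integrable g volume := by
    rw [hg, Measure.volume_eq_prod]
    apply Integrable.mul_prod
    · exact (integrable_indicator_iff measurableSet_Ioo).2
        (integrableOn_const measure_Ioo_lt_top.ne)
    · exact (integrable_indicator_iff hDm).2 intOn_disc
  have hmeas : AEStronglyMeasurable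
      (A.indicator (fun p : ℝ × ℝ × ℝ => (1 / Real.sqrt (p.1 ^ 2 + p.2.1 ^ 2 + p.2.2 ^ 2))
        * (-(p.1 - δ) / Real.sqrt ((p.1 - δ) ^ 2 + p.2.1 ^ 2 + p.2.2 ^ 2) ^ 3)
        * p.1 ^ m)) volume := by
    apply Measurable.aestronglyMeasurable
    apply Measurable.indicator _ hAm
    fun_prop
  have h0 : volume {p : ℝ × ℝ × ℝ | p.2.1 = 0 ∧ p.2.2 = 0} = 0 := by
    refine measure_mono_null (fun p hp => ?_) (show volume ((univ : Set ℝ) ×ˢ {x : ℝ × ℝ | x.2 = 0}) = 0 from ?_)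
    · exact ⟨trivial, hp.2⟩
    · rw [Measure.volume_eq_prod, Measure.prod_prod, null_axis, mul_zero]
  refine Integrable.mono' hgint hmeas ?_
  have hae : ∀ᵐ p : ℝ × ℝ × ℝ, ¬(p.2.1 = 0 ∧ p.2.2 = 0) := by
    rw [ae_iff]
    simpa using h0
  filter_upwards [hae] with p hp
  have hbc : 0 < p.2.1 ^ 2 + p.2.2 ^ 2 := by
    rcases not_and_or.1 hp with h | h
    · exact add_pos_of_pos_of_nonneg (pow_two_pos_of_ne_zero h) (sq_nonneg _)
    · exact add_pos_of_nonneg_of_pos (sq_nonneg _) (pow_two_pos_of_ne_zero h)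
  by_cases hpA : p ∈ A
  · obtain ⟨hdisc, hta, htb⟩ := id hpA
    rw [Set.indicator_of_mem hpA]
    show _ ≤ ((Ioo (-1:ℝ) 0).indicator (fun _ => (δ+1)/δ^3) p.1)
      * (D.indicator (fun x => 1 / Real.sqrt (x.1 ^ 2 + x.2 ^ 2)) p.2)
    rw [Set.indicator_of_mem (show p.1 ∈ Ioo (-1:ℝ) 0 from ⟨hta, htb⟩),
      Set.indicator_of_mem (show p.2 ∈ D from hdisc)]
    set a := p.1; set b := p.2.1; set c := p.2.2
    have ha2 : 0 < a ^ 2 + b ^ 2 + c ^ 2 := by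
      have := pow_two_pos_of_ne_zero (show a ≠ 0 from ne_of_lt htb)
      nlinarith
    have hsd : δ ≤ Real.sqrt ((a - δ) ^ 2 + b ^ 2 + c ^ 2) := by
      have : Real.sqrt (δ ^ 2) ≤ Real.sqrt ((a - δ) ^ 2 + b ^ 2 + c ^ 2) :=
        Real.sqrt_le_sqrt (by nlinarith)
      rwa [Real.sqrt_sq hδ.le] at this
    have habs : |(1 / Real.sqrt (a ^ 2 + b ^ 2 + c ^ 2))
        * (-(a - δ) / Real.sqrt ((a - δ) ^ 2 + b ^ 2 + c ^ 2) ^ 3) * a ^ m|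
        = (1 / Real.sqrt (a ^ 2 + b ^ 2 + c ^ 2))
          * ((δ - a) / Real.sqrt ((a - δ) ^ 2 + b ^ 2 + c ^ 2) ^ 3) * |a| ^ m := by
      have e1 : |1 / Real.sqrt (a ^ 2 + b ^ 2 + c ^ 2)|
          = 1 / Real.sqrt (a ^ 2 + b ^ 2 + c ^ 2) := abs_of_nonneg (by positivity)
      have e2 : |(-(a - δ)) / Real.sqrt ((a - δ) ^ 2 + b ^ 2 + c ^ 2) ^ 3|
          = (δ - a) / Real.sqrt ((a - δ) ^ 2 + b ^ 2 + c ^ 2) ^ 3 := by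
        rw [abs_div, neg_sub, abs_of_nonneg (by linarith : (0:ℝ) ≤ δ - a),
          abs_of_nonneg (by positivity : (0:ℝ) ≤ Real.sqrt ((a - δ) ^ 2 + b ^ 2 + c ^ 2) ^ 3)]
      rw [abs_mul, abs_mul, abs_pow, e1, e2]
    rw [Real.norm_eq_abs, habs]
    have hb1 : 1 / Real.sqrt (a ^ 2 + b ^ 2 + c ^ 2) ≤ 1 / Real.sqrt (b ^ 2 + c ^ 2) := by
      apply one_div_le_one_div_of_le (Real.sqrt_pos.2 hbc)
      apply Real.sqrt_le_sqrt
      nlinarith [sq_nonneg a]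
    have hb2 : (δ - a) / Real.sqrt ((a - δ) ^ 2 + b ^ 2 + c ^ 2) ^ 3 ≤ (δ + 1) / δ ^ 3 := by
      apply div_le_div₀ (by positivity) (by linarith) (by positivity)
      exact pow_le_pow_left₀ hδ.le hsd 3
    have hb3 : |a| ^ m ≤ 1 := by
      apply pow_le_one₀ (abs_nonneg _)
      rw [abs_of_neg htb]; linarith
    calc (1 / Real.sqrt (a ^ 2 + b ^ 2 + c ^ 2))
          * ((δ - a) / Real.sqrt ((a - δ) ^ 2 + b ^ 2 + c ^ 2) ^ 3) * |a| ^ m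
        ≤ (1 / Real.sqrt (b ^ 2 + c ^ 2)) * ((δ + 1) / δ ^ 3) * 1 := by
          apply mul_le_mul _ hb3 (by positivity) (by positivity)
          apply mul_le_mul hb1 hb2 (div_nonneg (by linarith) (by positivity)) (by positivity)
      _ = (δ + 1) / δ ^ 3 * (1 / Real.sqrt (b ^ 2 + c ^ 2)) := by ring
  · rw [Set.indicator_of_notMem hpA, norm_zero]
    show (0:ℝ) ≤ ((Ioo (-1:ℝ) 0).indicator (fun _ => (δ+1)/δ^3) p.1)
      * (D.indicator (fun x => 1 / Real.sqrt (x.1 ^ 2 + x.2 ^ 2)) p.2)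
    apply mul_nonneg <;> apply Set.indicator_nonneg <;> intros <;> positivity





/-- Reduction of the singular volume integral `∫_Ω (1/|y|) ∂₁(1/|y-z_δ|) y₁^m dy` over the
cylinder `Ω = {y₂²+y₃² < 1, -1 < y₁ < 0}` with `z_δ = (δ,0,0)` to an iterated integral. -/
theorem stmt_6 (m : ℕ) (hm : 1 ≤ m) (δ : ℝ) (hδ : 0 < δ) :
    (∫ y in {y : Fin 3 → ℝ | (y 1) ^ 2 + (y 2) ^ 2 < 1 ∧ -1 < y 0 ∧ y 0 < 0},
        (1 / Real.sqrt ((y 0) ^ 2 + (y 1) ^ 2 + (y 2) ^ 2))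
          * (-(y 0 - δ) / Real.sqrt ((y 0 - δ) ^ 2 + (y 1) ^ 2 + (y 2) ^ 2) ^ 3)
          * (y 0) ^ m)
      = (-1 : ℝ) ^ m * (2 * Real.pi) *
          ∫ y₁ in (0:ℝ)..1, (y₁ + δ) * y₁ ^ m *
            ∫ s in y₁..Real.sqrt (y₁ ^ 2 + 1),
              1 / Real.sqrt (s ^ 2 + δ * (2 * y₁ + δ)) ^ 3 := by
  set A : Set (ℝ × ℝ × ℝ) := {p : ℝ × ℝ × ℝ | p.2.1 ^ 2 + p.2.2 ^ 2 < 1 ∧ -1 < p.1 ∧ p.1 < 0}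
    with hA
  set f' : ℝ × ℝ × ℝ → ℝ := fun p => (1 / Real.sqrt (p.1 ^ 2 + p.2.1 ^ 2 + p.2.2 ^ 2))
        * (-(p.1 - δ) / Real.sqrt ((p.1 - δ) ^ 2 + p.2.1 ^ 2 + p.2.2 ^ 2) ^ 3)
        * p.1 ^ m with hf'
  have hSm : MeasurableSet {y : Fin 3 → ℝ | (y 1) ^ 2 + (y 2) ^ 2 < 1 ∧ -1 < y 0 ∧ y 0 < 0} := by
    have h1 : MeasurableSet {y : Fin 3 → ℝ | (y 1) ^ 2 + (y 2) ^ 2 < 1} :=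
      measurableSet_lt (by fun_prop : Measurable fun y : Fin 3 → ℝ => (y 1) ^ 2 + (y 2) ^ 2)
        measurable_const
    have h2 : MeasurableSet {y : Fin 3 → ℝ | -1 < y 0} :=
      measurableSet_lt measurable_const (by fun_prop : Measurable fun y : Fin 3 → ℝ => y 0)
    have h3 : MeasurableSet {y : Fin 3 → ℝ | y 0 < 0} :=
      measurableSet_lt (by fun_prop : Measurable fun y : Fin 3 → ℝ => y 0) measurable_const
    exact h1.inter (h2.inter h3)
  rw [← integral_indicator hSm]
  rw [← E3_mp.integral_comp'
    (({y : Fin 3 → ℝ | (y 1) ^ 2 + (y 2) ^ 2 < 1 ∧ -1 < y 0 ∧ y 0 < 0}).indicator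
      (fun y => (1 / Real.sqrt ((y 0) ^ 2 + (y 1) ^ 2 + (y 2) ^ 2))
          * (-(y 0 - δ) / Real.sqrt ((y 0 - δ) ^ 2 + (y 1) ^ 2 + (y 2) ^ 2) ^ 3)
          * (y 0) ^ m))]
  have hcomp : (fun p : ℝ × ℝ × ℝ =>
      ({y : Fin 3 → ℝ | (y 1) ^ 2 + (y 2) ^ 2 < 1 ∧ -1 < y 0 ∧ y 0 < 0}).indicator
      (fun y => (1 / Real.sqrt ((y 0) ^ 2 + (y 1) ^ 2 + (y 2) ^ 2))
          * (-(y 0 - δ) / Real.sqrt ((y 0 - δ) ^ 2 + (y 1) ^ 2 + (y 2) ^ 2) ^ 3)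
          * (y 0) ^ m) (E3 p)) = A.indicator f' := rfl
  rw [hcomp]
  rw [Measure.volume_eq_prod, integral_prod _ (by
    rw [← Measure.volume_eq_prod]; exact intA m δ hδ)]
  have hin : (fun t : ℝ => ∫ x : ℝ × ℝ, A.indicator f' (t, x))
      = (Ioo (-1:ℝ) 0).indicator (fun t => (2 * π) * ((δ - t) * t ^ m *
          ∫ s in (-t)..Real.sqrt (t ^ 2 + 1), 1 / Real.sqrt (s ^ 2 + δ * (δ - 2 * t)) ^ 3)) := by
    funext t
    by_cases htI : t ∈ Ioo (-1:ℝ) 0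
    · rw [Set.indicator_of_mem htI]
      have hx : ∀ x : ℝ × ℝ, A.indicator f' (t, x)
          = ({x : ℝ × ℝ | x.1 ^ 2 + x.2 ^ 2 < 1}.indicator
            (fun x => (1 / Real.sqrt (t ^ 2 + x.1 ^ 2 + x.2 ^ 2))
              * (-(t - δ) / Real.sqrt ((t - δ) ^ 2 + x.1 ^ 2 + x.2 ^ 2) ^ 3) * t ^ m)) x := by
        intro x
        by_cases hxD : x ∈ {x : ℝ × ℝ | x.1 ^ 2 + x.2 ^ 2 < 1}
        · rw [Set.indicator_of_mem (show (t, x) ∈ A from ⟨hxD, htI.1, htI.2⟩),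
            Set.indicator_of_mem hxD]
        · rw [Set.indicator_of_notMem (fun h => hxD h.1),
            Set.indicator_of_notMem hxD]
      simp only [hx]
      exact inner2 m δ t hδ htI.2
    · rw [Set.indicator_of_notMem htI]
      have hx : ∀ x : ℝ × ℝ, A.indicator f' (t, x) = 0 := fun x =>
        Set.indicator_of_notMem (fun h => htI ⟨h.2.1, h.2.2⟩) _
      simp only [hx, integral_zero]
  rw [hin, integral_indicator measurableSet_Ioo, ← integral_Ioc_eq_integral_Ioo,
    ← intervalIntegral.integral_of_le (by norm_num : (-1:ℝ) ≤ 0)]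
  have hneg := intervalIntegral.integral_comp_neg (a := (0:ℝ)) (b := 1)
    (fun t => (2 * π) * ((δ - t) * t ^ m *
      ∫ s in (-t)..Real.sqrt (t ^ 2 + 1), 1 / Real.sqrt (s ^ 2 + δ * (δ - 2 * t)) ^ 3))
  rw [neg_zero] at hneg
  rw [← hneg, ← intervalIntegral.integral_const_mul]
  apply intervalIntegral.integral_congr
  intro y _
  simp only
  have h1 : δ * (δ - 2 * -y) = δ * (2 * y + δ) := by ring
  have h2 : (-y : ℝ) ^ 2 = y ^ 2 := by ring
  rw [neg_neg, h2]
  simp only [h1]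
  rw [neg_pow]
  ring
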